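/- Let (M, μ) be a finite measure space, F: M → M a bi-measurable bijection, and suppose there is a unitary operator U on L²(M, μ) satisfying U·M_f = M_{f∘F⁻¹}·U for every bounded measurable function f (where M_f denotes multiplication by f). Then the pushforward measure μ_F defined by μ_F(A) = μ(F(A)) is absolutely continuous with respect to μ. -/

import Mathlib

open MeasureTheory

/-- If a bi-measurable bijection F of a finite measure space is implemented
by a unitary U on L²(μ) intertwining multiplication operators (U·M_f = M_{f∘F⁻¹}·U),
then the pushforward measure μ_F(A) = μ(F(A)) is absolutely continuous w.r.t. μ. -/
theorem pushforward_absolutelyContinuous {M : Type*} [MeasurableSpace M]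
    (μ : Measure M) [IsFiniteMeasure μ] (F : M ≃ᵐ M)
    (U : Lp ℂ 2 μ ≃ₗᵢ[ℂ] Lp ℂ 2 μ)
    (hU : ∀ f : M → ℂ, Measurable f → (∃ C, ∀ x, ‖f x‖ ≤ C) →
      ∀ ξ η : Lp ℂ 2 μ, (∀ᵐ m ∂μ, (η : M → ℂ) m = f m * (ξ : M → ℂ) m) →
        ∀ᵐ m ∂μ, (U η : M → ℂ) m = f (F.symm m) * (U ξ : M → ℂ) m) :
    μ.map F.symm ≪ μ := by
  apply Measure.AbsolutelyContinuous.mk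
  intro s hs hμs
  rw [Measure.map_apply F.symm.measurable hs]
  set f : M → ℂ := Set.indicator s (fun _ => (1 : ℂ)) with hf
  have hfm : Measurable f := measurable_const.indicator hs
  have hfb : ∃ C, ∀ x, ‖f x‖ ≤ C := by
    refine ⟨1, fun x => ?_⟩
    by_cases hx : x ∈ s <;> simp [hf, hx]
  have h1 : MemLp (fun _ : M => (1 : ℂ)) 2 μ := memLp_const 1
  set o : Lp ℂ 2 μ := h1.toLp _ with ho
  set ξ : Lp ℂ 2 μ := U.symm o with hξ
  have hzero : ∀ᵐ m ∂μ, ((0 : Lp ℂ 2 μ) : M → ℂ) m = f m * (ξ : M → ℂ) m := by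
    have hns : ∀ᵐ m ∂μ, m ∉ s := (measure_eq_zero_iff_ae_notMem).mp hμs
    filter_upwards [Lp.coeFn_zero ℂ 2 μ, hns] with m hm hms
    simpa [hf, hms] using hm
  have hconc := hU f hfm hfb ξ 0 hzero
  have hUz : ∀ᵐ m ∂μ, (U 0 : M → ℂ) m = 0 := by
    rw [map_zero]
    exact Lp.coeFn_zero ℂ 2 μ
  have hUξ : ∀ᵐ m ∂μ, (U ξ : M → ℂ) m = 1 := by
    have : U ξ = o := by simp [hξ]
    rw [this]
    exact h1.coeFn_toLp
  have : ∀ᵐ m ∂μ, m ∉ F.symm ⁻¹' s := by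
    filter_upwards [hconc, hUz, hUξ] with m h1 h2 h3 hmem
    rw [h2, h3] at h1
    simp [hf, Set.indicator_of_mem (Set.mem_preimage.mp hmem)] at h1
  exact (measure_eq_zero_iff_ae_notMem).mpr this
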